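/- A feasible linear program whose objective is bounded above attains its supremum: if the polyhedron {x : Fin q → ℝ | A.mulVec x ≤ b} is nonempty and the set {c ⬝ᵥ x | A.mulVec x ≤ b} is bounded above, then there exists x* with A.mulVec x* ≤ b and c ⬝ᵥ x* = sSup {c ⬝ᵥ x | A.mulVec x ≤ b}. -/

import Mathlib

open Matrix

def LPconstr {n : ℕ} (l : List ((Fin n → ℝ) × ℝ)) (x : Fin n → ℝ) : Prop :=
  ∀ p ∈ l, p.1 ⬝ᵥ x ≤ p.2

lemma dot_snoc {n : ℕ} (a : Fin (n+1) → ℝ) (w : Fin n → ℝ) (u : ℝ) :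
    a ⬝ᵥ Fin.snoc w u = Fin.init a ⬝ᵥ w + a (Fin.last n) * u := by
  simp [dotProduct, Fin.sum_univ_castSucc, Fin.init]

lemma le_foldr_max (L : List ℝ) (b v : ℝ) (hv : v ∈ L) : v ≤ L.foldr max b := by
  induction L with
  | nil => simp at hv
  | cons a t ih =>
    rcases List.mem_cons.1 hv with rfl | h
    · exact le_max_left _ _
    · exact le_trans (ih h) (le_max_right _ _)

lemma foldr_min_le_mem (L : List ℝ) (b v : ℝ) (hv : v ∈ L) : L.foldr min b ≤ v := by
  induction L with
  | nil => simp at hv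
  | cons a t ih =>
    rcases List.mem_cons.1 hv with rfl | h
    · exact min_le_left _ _
    · exact le_trans (min_le_right _ _) (ih h)

lemma le_foldr_min (L : List ℝ) (b v : ℝ) (hb : v ≤ b) (h : ∀ v' ∈ L, v ≤ v') :
    v ≤ L.foldr min b := by
  induction L with
  | nil => simpa
  | cons a t ih =>
    exact le_min (h a (by simp)) (ih fun v' hv' => h v' (by simp [hv']))

lemma fm {n : ℕ} (l : List ((Fin (n+1) → ℝ) × ℝ)) :
    ∃ l' : List ((Fin n → ℝ) × ℝ), ∀ w : Fin n → ℝ,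
      LPconstr l' w ↔ ∃ u : ℝ, LPconstr l (Fin.snoc w u) := by
  classical
  set α : (Fin (n+1) → ℝ) × ℝ → ℝ := fun p => p.1 (Fin.last n) with hα
  refine ⟨((l.filter (fun p => α p = 0)).map (fun p => (Fin.init p.1, p.2)))
    ++ (((l.filter (fun p => α p < 0)) ×ˢ (l.filter (fun p => 0 < α p))).map
       (fun pq => (α pq.2 • Fin.init pq.1.1 - α pq.1 • Fin.init pq.2.1,
                   α pq.2 * pq.1.2 - α pq.1 * pq.2.2))), fun w => ?_⟩
  constructor
  · intro hc
    -- build u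
    set Lf : (Fin (n+1) → ℝ) × ℝ → ℝ := fun p => (p.2 - Fin.init p.1 ⬝ᵥ w) / α p with hLf
    set Ls : List ℝ := (l.filter (fun p => α p < 0)).map Lf with hLs
    set Us : List ℝ := (l.filter (fun p => 0 < α p)).map Lf with hUs
    have cross : ∀ v ∈ Ls, ∀ v' ∈ Us, v ≤ v' := by
      intro v hv v' hv'
      rw [hLs, List.mem_map] at hv
      obtain ⟨pp, hpm, rfl⟩ := hv
      rw [hUs, List.mem_map] at hv'
      obtain ⟨qq, hqm, rfl⟩ := hv'
      have hcp := hc _ (List.mem_append_right _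
        (List.mem_map.2 ⟨(pp, qq), List.pair_mem_product.2 ⟨hpm, hqm⟩, rfl⟩))
      rw [List.mem_filter] at hpm hqm
      have hpneg : α pp < 0 := by simpa using hpm.2
      have hqpos : 0 < α qq := by simpa using hqm.2
      simp only [sub_dotProduct, smul_dotProduct, smul_eq_mul] at hcp
      show (pp.2 - Fin.init pp.1 ⬝ᵥ w) / α pp ≤ (qq.2 - Fin.init qq.1 ⬝ᵥ w) / α qq
      rw [div_le_iff_of_neg hpneg, div_mul_eq_mul_div, div_le_iff₀ hqpos]
      nlinarith
    refine ⟨Us.foldr min (Ls.foldr max 0), fun p hp => ?_⟩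
    rcases lt_trichotomy (α p) 0 with h0 | h0 | h0
    · have hmem : Lf p ∈ Ls := List.mem_map.2 ⟨p, List.mem_filter.2 ⟨hp, by simpa using h0⟩, rfl⟩
      have h1 : Lf p ≤ Us.foldr min (Ls.foldr max 0) :=
        le_foldr_min _ _ _ (le_foldr_max _ _ _ hmem) (fun v' hv' => cross _ hmem _ hv')
      rw [hLf, div_le_iff_of_neg h0] at h1
      rw [dot_snoc]
      linarith
    · have hmem := hc _ (List.mem_append_left _
        (List.mem_map.2 ⟨p, List.mem_filter.2 ⟨hp, by simpa using h0⟩, rfl⟩))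
      have h0' : p.1 (Fin.last n) = 0 := h0
      rw [dot_snoc, h0']
      simpa using hmem
    · have hmem : Lf p ∈ Us := List.mem_map.2 ⟨p, List.mem_filter.2 ⟨hp, by simpa using h0⟩, rfl⟩
      have h1 : Us.foldr min (Ls.foldr max 0) ≤ Lf p := foldr_min_le_mem _ _ _ hmem
      rw [hLf, le_div_iff₀ h0] at h1
      rw [dot_snoc]
      linarith
  · rintro ⟨u, hu⟩ p' hp'
    rcases List.mem_append.1 hp' with h | h
    · rw [List.mem_map] at h
      obtain ⟨p, hpm, rfl⟩ := h
      rw [List.mem_filter] at hpm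
      have h0 : α p = 0 := by simpa using hpm.2
      have h0' : p.1 (Fin.last n) = 0 := h0
      have := hu p hpm.1
      rw [dot_snoc, h0'] at this
      simpa using this
    · rw [List.mem_map] at h
      obtain ⟨⟨pp, qq⟩, hm, rfl⟩ := h
      replace hm := List.pair_mem_product.1 hm
      have h1 := hu pp (List.mem_filter.1 hm.1).1
      have h2 := hu qq (List.mem_filter.1 hm.2).1
      have hpneg : α pp < 0 := by simpa using (List.mem_filter.1 hm.1).2
      have hqpos : 0 < α qq := by simpa using (List.mem_filter.1 hm.2).2
      rw [dot_snoc] at h1 h2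
      simp only [sub_dotProduct, smul_dotProduct, smul_eq_mul]
      nlinarith

lemma fm_all {n : ℕ} (l : List ((Fin (n+1) → ℝ) × ℝ)) :
    ∃ l' : List ((Fin 1 → ℝ) × ℝ), ∀ w : Fin 1 → ℝ,
      LPconstr l' w ↔ ∃ z : Fin (n+1) → ℝ, z 0 = w 0 ∧ LPconstr l z := by
  induction n with
  | zero =>
    refine ⟨l, fun w => ⟨fun h => ⟨w, rfl, h⟩, ?_⟩⟩
    rintro ⟨z, hz0, hz⟩
    have : z = w := funext fun i => by rw [Fin.fin_one_eq_zero i]; exact hz0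
    rwa [this] at hz
  | succ n ih =>
    obtain ⟨l₁, hl₁⟩ := fm l
    obtain ⟨l', hl'⟩ := ih l₁
    refine ⟨l', fun w => (hl' w).trans ⟨?_, ?_⟩⟩
    · rintro ⟨y, hy0, hy⟩
      obtain ⟨u, hu⟩ := (hl₁ y).1 hy
      refine ⟨Fin.snoc y u, ?_, hu⟩
      rw [show (0 : Fin (n+2)) = Fin.castSucc 0 by simp, Fin.snoc_castSucc, hy0]
    · rintro ⟨z, hz0, hz⟩
      refine ⟨Fin.init z, ?_, (hl₁ _).2 ⟨z (Fin.last (n+1)), by rwa [Fin.snoc_init_self]⟩⟩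
      rw [show (Fin.init z) 0 = z (Fin.castSucc 0) from rfl]
      simpa using hz0

lemma cons_dot {n : ℕ} (a : ℝ) (v : Fin n → ℝ) (z : Fin (n+1) → ℝ) :
    Fin.cons a v ⬝ᵥ z = a * z 0 + v ⬝ᵥ Fin.tail z := by
  simp [dotProduct, Fin.sum_univ_succ, Fin.tail]

theorem lp_sup_attained {p q : ℕ}
    (A : Matrix (Fin p) (Fin q) ℝ) (b : Fin p → ℝ) (c : Fin q → ℝ)
    (hne : Set.Nonempty {x : Fin q → ℝ | A.mulVec x ≤ b})
    (hbdd : BddAbove {r : ℝ | ∃ x, A.mulVec x ≤ b ∧ r = c ⬝ᵥ x}) :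
    ∃ xstar : Fin q → ℝ, A.mulVec xstar ≤ b ∧
      c ⬝ᵥ xstar = sSup {r : ℝ | ∃ x, A.mulVec x ≤ b ∧ r = c ⬝ᵥ x} := by
  classical
  set R : Set ℝ := {r : ℝ | ∃ x, A.mulVec x ≤ b ∧ r = c ⬝ᵥ x} with hR
  -- the augmented system on Fin (q+1): variable 0 is t, the rest is x
  set laug : List ((Fin (q+1) → ℝ) × ℝ) :=
    (Fin.cons 1 (-c), (0:ℝ)) :: (List.finRange p).map (fun i => (Fin.cons 0 (A i), b i)) with hlaug
  obtain ⟨l', hl'⟩ := fm_all laug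
  set D : Set ℝ := {t : ℝ | ∃ x, A.mulVec x ≤ b ∧ t ≤ c ⬝ᵥ x} with hD
  have hDiff : ∀ t : ℝ, t ∈ D ↔ LPconstr l' (fun _ => t) := by
    intro t
    rw [hl' (fun _ => t)]
    constructor
    · rintro ⟨x, hx, htx⟩
      refine ⟨Fin.cons t x, rfl, ?_⟩
      intro pr hpr
      rcases List.mem_cons.1 hpr with rfl | hpr
      · simpa [cons_dot, neg_dotProduct] using htx
      · obtain ⟨i, _, rfl⟩ := List.mem_map.1 hpr
        simpa [cons_dot, Matrix.mulVec] using hx i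
    · rintro ⟨z, hz0, hz⟩
      refine ⟨Fin.tail z, fun i => ?_, ?_⟩
      · have h := hz _ (List.mem_cons_of_mem _ (List.mem_map.2 ⟨i, List.mem_finRange i, rfl⟩))
        rw [cons_dot] at h
        simpa [Matrix.mulVec] using h
      · have h := hz _ List.mem_cons_self
        rw [cons_dot, neg_dotProduct, hz0] at h
        have h' : 1 * t + -(c ⬝ᵥ Fin.tail z) ≤ 0 := h
        linarith
  -- D is closed, nonempty, bounded above
  have hclosed : IsClosed D := by
    have : D = ⋂ pr ∈ {pr | pr ∈ l'}, {t : ℝ | pr.1 0 * t ≤ pr.2} := by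
      ext t
      simp only [Set.mem_iInter, Set.mem_setOf_eq, hDiff t, LPconstr]
      constructor
      · intro h pr hpr
        have := h pr hpr
        rwa [show pr.1 ⬝ᵥ (fun _ => t) = pr.1 0 * t by
          simp [dotProduct, Fin.sum_univ_one]] at this
      · intro h pr hpr
        rw [show pr.1 ⬝ᵥ (fun _ => t) = pr.1 0 * t by
          simp [dotProduct, Fin.sum_univ_one]]
        exact h pr hpr
    rw [this]
    exact isClosed_biInter fun pr _ =>
      isClosed_le (by continuity) continuous_const
  obtain ⟨x₀, hx₀⟩ := hne
  have hDne : D.Nonempty := ⟨c ⬝ᵥ x₀, x₀, hx₀, le_refl _⟩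
  have hDbdd : BddAbove D := by
    obtain ⟨M, hM⟩ := hbdd
    refine ⟨M, fun t ht => ?_⟩
    obtain ⟨x, hx, htx⟩ := ht
    exact le_trans htx (hM ⟨x, hx, rfl⟩)
  have hsup := hclosed.csSup_mem hDne hDbdd
  obtain ⟨xstar, hxs, hts⟩ := hsup
  refine ⟨xstar, hxs, le_antisymm (le_csSup hbdd ⟨xstar, hxs, rfl⟩) ?_⟩
  have hRD : R ⊆ D := by
    rintro r ⟨x, hx, rfl⟩
    exact ⟨x, hx, le_refl _⟩
  exact le_trans (csSup_le_csSup hDbdd ⟨c ⬝ᵥ x₀, x₀, hx₀, rfl⟩ hRD) hts
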